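/- Let P be an Ising model on variables x_0, x_1, …, x_n with parameters w_{i,j} (0 ≤ i < j ≤ n) and h_i (0 ≤ i ≤ n). Fix 1 ≤ k ≤ n and δ > 0, and let Q be the Ising model with the same parameters except w'_{0,k} = w_{0,k} + δ. Then the total variation distance between P and Q satisfies dTV(P, Q) = Σ_{x ∈ {−1,1}^{n+1} : x_0 x_k = −1} (P(x) − Q(x)). -/
import Mathlib


open Finset

/-- The spin value (`+1` or `−1`) encoded by a Boolean. -/
noncomputable def spin (b : Bool) : ℝ := if b then 1 else -1

/-- The (unnormalized) weight of a configuration `x ∈ {−1,1}^N` of the Ising model with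
pair parameters `w i j` (used for `i < j`) and field parameters `h i`:
`E(x) = exp(Σ_{i<j} w_{i,j} x_i x_j + Σ_i h_i x_i)`. -/
noncomputable def isingWeight {N : ℕ} (w : Fin N → Fin N → ℝ) (h : Fin N → ℝ)
    (x : Fin N → Bool) : ℝ :=
  Real.exp ((∑ i, ∑ j ∈ Finset.Ioi i, w i j * spin (x i) * spin (x j)) +
    ∑ i, h i * spin (x i))

/-- The partition function `Z = Σ_x E(x)` of the Ising model. -/
noncomputable def isingZ {N : ℕ} (w : Fin N → Fin N → ℝ) (h : Fin N → ℝ) : ℝ :=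
  ∑ x : Fin N → Bool, isingWeight w h x

/-- The probability `P(x) = E(x)/Z` of a configuration of the Ising model. -/
noncomputable def isingProb {N : ℕ} (w : Fin N → Fin N → ℝ) (h : Fin N → ℝ)
    (x : Fin N → Bool) : ℝ :=
  isingWeight w h x / isingZ w h

open scoped Classical

/-- with `Q` obtained from the Ising model `P` by replacing `w_{0,k}` with
`w_{0,k} + δ` (`δ > 0`), the total variation distance `Σ_x max(0, P(x) − Q(x))` equals
`Σ_{x : x_0 x_k = −1} (P(x) − Q(x))`. -/
theorem ising_tv_eq_sum_on_disagreement
    (n : ℕ) (w : Fin (n + 1) → Fin (n + 1) → ℝ) (h : Fin (n + 1) → ℝ)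
    (k : Fin (n + 1)) (hk : k ≠ 0) (δ : ℝ) (hδ : 0 < δ)
    (w' : Fin (n + 1) → Fin (n + 1) → ℝ)
    (hw' : ∀ i j, w' i j = if i = 0 ∧ j = k then w i j + δ else w i j) :
    (∑ x : Fin (n + 1) → Bool, max 0 (isingProb w h x - isingProb w' h x))
    = ∑ x ∈ Finset.univ.filter
          (fun x : Fin (n + 1) → Bool => spin (x 0) * spin (x k) = -1),
        (isingProb w h x - isingProb w' h x) := by
  classical
  set s : (Fin (n+1) → Bool) → ℝ := fun x => spin (x 0) * spin (x k) with hs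
  have hspin : ∀ b, spin b = 1 ∨ spin b = -1 := fun b => by cases b <;> simp [spin]
  have hs_cases : ∀ x, s x = 1 ∨ s x = -1 := by
    intro x
    rcases hspin (x 0) with h1|h1 <;> rcases hspin (x k) with h2|h2 <;>
      simp [hs, h1, h2]
  have hk0 : k ∈ Finset.Ioi (0 : Fin (n+1)) := Finset.mem_Ioi.mpr (Fin.pos_of_ne_zero hk)
  have hweight' : ∀ x, isingWeight w' h x = isingWeight w h x * Real.exp (δ * s x) := by
    intro x
    have hsum : (∑ i, ∑ j ∈ Finset.Ioi i, w' i j * spin (x i) * spin (x j))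
        = (∑ i, ∑ j ∈ Finset.Ioi i, w i j * spin (x i) * spin (x j)) + δ * s x := by
      have hterm : ∀ i : Fin (n+1), ∀ j ∈ Finset.Ioi i,
          w' i j * spin (x i) * spin (x j)
          = w i j * spin (x i) * spin (x j)
            + (if i = 0 ∧ j = k then δ * spin (x i) * spin (x j) else 0) := by
        intro i j _
        rw [hw' i j]
        split <;> ring
      rw [Finset.sum_congr rfl (fun i _ => Finset.sum_congr rfl (hterm i))]
      simp only [Finset.sum_add_distrib]
      congr 1
      have hinner : ∀ i : Fin (n+1),
          (∑ j ∈ Finset.Ioi i, if i = 0 ∧ j = k then δ * spin (x i) * spin (x j) else 0)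
          = if i = 0 then δ * spin (x 0) * spin (x k) else 0 := by
        intro i
        by_cases hi : i = 0
        · subst hi
          simp only [true_and]
          rw [Finset.sum_eq_single_of_mem k hk0 (fun j _ hj => by simp [hj])]
          simp
        · simp [hi]
      rw [Finset.sum_congr rfl (fun i _ => hinner i)]
      rw [Finset.sum_ite_eq' Finset.univ (0 : Fin (n+1))
        (fun _ => δ * spin (x 0) * spin (x k))]
      simp [hs, mul_assoc]
    show Real.exp _ = Real.exp _ * Real.exp _
    rw [← Real.exp_add, hsum]
    congr 1
    ring
  have hWpos : ∀ x : Fin (n+1) → Bool, 0 < isingWeight w h x := fun x => Real.exp_pos _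
  have hZpos : 0 < isingZ w h :=
    Finset.sum_pos (fun x _ => hWpos x) Finset.univ_nonempty
  have hZ'pos : 0 < isingZ w' h :=
    Finset.sum_pos (fun x _ => Real.exp_pos _) Finset.univ_nonempty
  have hZ'le : isingZ w' h ≤ Real.exp δ * isingZ w h := by
    show (∑ x : Fin (n+1) → Bool, isingWeight w' h x) ≤ _
    rw [isingZ, Finset.mul_sum]
    apply Finset.sum_le_sum
    intro x _
    rw [hweight' x, mul_comm (Real.exp δ)]
    apply mul_le_mul_of_nonneg_left _ (hWpos x).le
    apply Real.exp_le_exp.mpr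
    rcases hs_cases x with h1|h1 <;> rw [h1] <;> nlinarith [hδ.le]
  have hZ'ge : Real.exp (-δ) * isingZ w h ≤ isingZ w' h := by
    show _ ≤ (∑ x : Fin (n+1) → Bool, isingWeight w' h x)
    rw [isingZ, Finset.mul_sum]
    apply Finset.sum_le_sum
    intro x _
    rw [hweight' x, mul_comm (Real.exp (-δ))]
    apply mul_le_mul_of_nonneg_left _ (hWpos x).le
    apply Real.exp_le_exp.mpr
    rcases hs_cases x with h1|h1 <;> rw [h1] <;> nlinarith [hδ.le]
  rw [Finset.sum_filter]
  apply Finset.sum_congr rfl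
  intro x _
  have hP : isingProb w h x = isingWeight w h x / isingZ w h := rfl
  have hQ : isingProb w' h x = isingWeight w h x * Real.exp (δ * s x) / isingZ w' h := by
    rw [isingProb, hweight' x]
  by_cases hx : s x = -1
  · rw [if_pos hx]
    apply max_eq_right
    rw [hP, hQ, hx, sub_nonneg, div_le_div_iff₀ hZ'pos hZpos]
    have : Real.exp (δ * -1) = Real.exp (-δ) := by ring_nf
    rw [this]
    nlinarith [(hWpos x).le, Real.exp_pos (-δ)]
  · have hx1 : s x = 1 := (hs_cases x).resolve_right hx
    rw [if_neg hx]
    apply max_eq_left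
    rw [hP, hQ, hx1, sub_nonpos, div_le_div_iff₀ hZpos hZ'pos]
    have : Real.exp (δ * 1) = Real.exp δ := by ring_nf
    rw [this]
    nlinarith [(hWpos x).le, Real.exp_pos δ]
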